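/- The k-algebras A₁^{sp} := k[x₁,x₂]/(x₂², x₁³) and A₂^{sp} := k[x₁,x₂]/(x₂² − x₁², x₁³) are not isomorphic as k-algebras. -/

import Mathlib

open MvPolynomial

/-- The ideal `(x₂², x₁³)` defining `A₁^{sp} = k[x₁,x₂]/(x₂², x₁³)`
(with `x₁ = X 0`, `x₂ = X 1`). -/
noncomputable def sp1Ideal (k : Type*) [Field k] : Ideal (MvPolynomial (Fin 2) k) :=
  Ideal.span {X 1 ^ 2, X 0 ^ 3}

/-- The ideal `(x₂² - x₁², x₁³)` defining `A₂^{sp} = k[x₁,x₂]/(x₂² - x₁², x₁³)`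
(with `x₁ = X 0`, `x₂ = X 1`). -/
noncomputable def sp2Ideal (k : Type*) [Field k] : Ideal (MvPolynomial (Fin 2) k) :=
  Ideal.span {X 1 ^ 2 - X 0 ^ 2, X 0 ^ 3}

namespace SpAux

open TrivSqZeroExt

variable (k : Type*) [Field k]

theorem vanish {B : Type*} [CommRing B] [Algebra k B] (f : MvPolynomial (Fin 2) k →ₐ[k] B)
    {p q : MvPolynomial (Fin 2) k} (h1 : f p = 0) (h2 : f q = 0) :
    ∀ a ∈ Ideal.span {p, q}, f a = 0 := by
  have hle : Ideal.span {p, q} ≤ RingHom.ker f := by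
    rw [Ideal.span_le]
    rintro x hx
    simp only [Set.mem_insert_iff, Set.mem_singleton_iff] at hx
    rcases hx with rfl | rfl
    · simpa [RingHom.mem_ker] using h1
    · simpa [RingHom.mem_ker] using h2
  intro a ha
  exact RingHom.mem_ker.mp (hle ha)

abbrev S := TrivSqZeroExt k (k × k)

abbrev E := Polynomial k ⧸ Ideal.span {(Polynomial.X : Polynomial k) ^ 3}

noncomputable def t : E k := Ideal.Quotient.mk _ Polynomial.X

noncomputable def qS : (MvPolynomial (Fin 2) k ⧸ sp2Ideal k) →ₐ[k] S k :=
  Ideal.Quotient.liftₐ _ (aeval ![inr (1, 0), inr (0, 1)])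
    (vanish k _
      (by simp [pow_succ, inr_mul_inr])
      (by simp [pow_succ, inr_mul_inr]))

noncomputable def hP : (MvPolynomial (Fin 2) k ⧸ sp2Ideal k) →ₐ[k] E k :=
  Ideal.Quotient.liftₐ _ (aeval ![t k, t k])
    (vanish k _ (by simp)
      (by
        simp only [map_pow, aeval_X, Matrix.cons_val_zero]
        rw [t, ← map_pow, Ideal.Quotient.eq_zero_iff_mem]
        exact Ideal.subset_span rfl))

noncomputable def hM : (MvPolynomial (Fin 2) k ⧸ sp2Ideal k) →ₐ[k] E k :=
  Ideal.Quotient.liftₐ _ (aeval ![t k, -t k])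
    (vanish k _ (by
      simp only [map_sub, map_pow, aeval_X, Matrix.cons_val_one, Matrix.head_cons,
        Matrix.cons_val_zero]
      ring)
      (by
        simp only [map_pow, aeval_X, Matrix.cons_val_zero]
        rw [t, ← map_pow, Ideal.Quotient.eq_zero_iff_mem]
        exact Ideal.subset_span rfl))

noncomputable def rho : E k →ₐ[k] DualNumber k :=
  Ideal.Quotient.liftₐ _ (Polynomial.aeval DualNumber.eps)
    (by
      intro a ha
      rw [Ideal.mem_span_singleton] at ha
      obtain ⟨c, rfl⟩ := ha
      rw [map_mul, map_pow, Polynomial.aeval_X, pow_succ, pow_two,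
        DualNumber.eps_mul_eps, zero_mul, zero_mul])

theorem qS_mk (p : MvPolynomial (Fin 2) k) :
    qS k (Ideal.Quotient.mk _ p) = aeval ![inr (1, 0), inr (0, 1)] p := rfl

theorem hP_mk (p : MvPolynomial (Fin 2) k) :
    hP k (Ideal.Quotient.mk _ p) = aeval ![t k, t k] p := rfl

theorem hM_mk (p : MvPolynomial (Fin 2) k) :
    hM k (Ideal.Quotient.mk _ p) = aeval ![t k, -t k] p := rfl

theorem rho_mk (p : Polynomial k) :
    rho k (Ideal.Quotient.mk _ p) = Polynomial.aeval DualNumber.eps p := rfl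

theorem rho_eq_zero {v : E k} (hv : v * v = 0) : rho k v = 0 := by
  obtain ⟨r, rfl⟩ := Ideal.Quotient.mk_surjective v
  have hdvd : (Polynomial.X : Polynomial k) ^ 3 ∣ r * r := by
    rw [← Ideal.mem_span_singleton]
    rwa [← map_mul, Ideal.Quotient.eq_zero_iff_mem] at hv
  have hx : Polynomial.X ∣ r :=
    (Polynomial.prime_X.dvd_mul.mp
      (dvd_trans (dvd_pow_self _ three_ne_zero) hdvd)).elim id id
  obtain ⟨r', rfl⟩ := hx
  have hdvd2 : (Polynomial.X : Polynomial k) ∣ r' * r' := by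
    have h1 : (Polynomial.X : Polynomial k) ^ 2 * Polynomial.X ∣
        Polynomial.X ^ 2 * (r' * r') := by
      have e1 : (Polynomial.X : Polynomial k) ^ 2 * Polynomial.X = Polynomial.X ^ 3 := by ring
      have e2 : (Polynomial.X : Polynomial k) ^ 2 * (r' * r') =
          Polynomial.X * r' * (Polynomial.X * r') := by ring
      rw [e1, e2]; exact hdvd
    exact (mul_dvd_mul_iff_left (pow_ne_zero 2 Polynomial.X_ne_zero)).mp h1
  have hx2 : Polynomial.X ∣ r' := (Polynomial.prime_X.dvd_mul.mp hdvd2).elim id id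
  obtain ⟨r'', rfl⟩ := hx2
  rw [rho_mk, map_mul, map_mul, Polynomial.aeval_X, ← mul_assoc,
    DualNumber.eps_mul_eps, zero_mul]

theorem comm_plus (v : MvPolynomial (Fin 2) k ⧸ sp2Ideal k) :
    TrivSqZeroExt.map (LinearMap.fst k k k + LinearMap.snd k k k) (qS k v) =
      rho k (hP k v) := by
  obtain ⟨p, rfl⟩ := Ideal.Quotient.mk_surjective v
  rw [qS_mk, hP_mk]
  have h : (TrivSqZeroExt.map (LinearMap.fst k k k + LinearMap.snd k k k)).comp
      (aeval (R := k) ![inr (1, 0), inr (0, 1)]) =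
      (rho k).comp (aeval ![t k, t k]) := by
    apply MvPolynomial.algHom_ext
    intro i
    rw [AlgHom.comp_apply, AlgHom.comp_apply, aeval_X, aeval_X]
    fin_cases i
    · simp only [Fin.zero_eta, Matrix.cons_val_zero]
      rw [TrivSqZeroExt.map_inr, t, rho_mk, Polynomial.aeval_X,
        LinearMap.add_apply, LinearMap.fst_apply, LinearMap.snd_apply]
      norm_num
    · simp only [Fin.mk_one, Matrix.cons_val_one, Matrix.head_cons, Matrix.cons_val_zero]
      rw [TrivSqZeroExt.map_inr, t, rho_mk, Polynomial.aeval_X,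
        LinearMap.add_apply, LinearMap.fst_apply, LinearMap.snd_apply]
      norm_num
  exact DFunLike.congr_fun h p

theorem comm_minus (v : MvPolynomial (Fin 2) k ⧸ sp2Ideal k) :
    TrivSqZeroExt.map (LinearMap.fst k k k - LinearMap.snd k k k) (qS k v) =
      rho k (hM k v) := by
  obtain ⟨p, rfl⟩ := Ideal.Quotient.mk_surjective v
  rw [qS_mk, hM_mk]
  have h : (TrivSqZeroExt.map (LinearMap.fst k k k - LinearMap.snd k k k)).comp
      (aeval (R := k) ![inr (1, 0), inr (0, 1)]) =
      (rho k).comp (aeval ![t k, -t k]) := by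
    apply MvPolynomial.algHom_ext
    intro i
    rw [AlgHom.comp_apply, AlgHom.comp_apply, aeval_X, aeval_X]
    fin_cases i
    · simp only [Fin.zero_eta, Matrix.cons_val_zero]
      rw [TrivSqZeroExt.map_inr, t, rho_mk, Polynomial.aeval_X,
        LinearMap.sub_apply, LinearMap.fst_apply, LinearMap.snd_apply]
      norm_num
    · simp only [Fin.mk_one, Matrix.cons_val_one, Matrix.head_cons, Matrix.cons_val_zero]
      rw [TrivSqZeroExt.map_inr, map_neg, t, rho_mk, Polynomial.aeval_X,
        LinearMap.sub_apply, LinearMap.fst_apply, LinearMap.snd_apply]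
      rw [show ((0:k) - 1 : k) = -1 by ring, show (-1 : k) = -(1:k) from rfl,
        TrivSqZeroExt.inr_neg]
      rfl
  exact DFunLike.congr_fun h p

end SpAux


set_option maxHeartbeats 1600000 in
open SpAux TrivSqZeroExt in
/-- The `k`-algebras `A₁^{sp} = k[x₁,x₂]/(x₂², x₁³)` and
`A₂^{sp} = k[x₁,x₂]/(x₂² - x₁², x₁³)` are not isomorphic as `k`-algebras. -/
theorem sp1_not_iso_sp2
    (k : Type*) [Field k] [IsAlgClosed k]
    (hchar2 : (2 : k) ≠ 0) (hchar3 : (3 : k) ≠ 0) :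
    IsEmpty ((MvPolynomial (Fin 2) k ⧸ sp1Ideal k) ≃ₐ[k]
      (MvPolynomial (Fin 2) k ⧸ sp2Ideal k)) := by
  constructor
  intro φ
  set z := φ (Ideal.Quotient.mk (sp1Ideal k) (X 1)) with hzdef
  set w := φ (Ideal.Quotient.mk (sp1Ideal k) (X 0)) with hwdef
  -- z² = 0 and w³ = 0
  have hz2 : z * z = 0 := by
    rw [hzdef, ← map_mul, ← map_mul]
    have h0 : (Ideal.Quotient.mk (sp1Ideal k)) (X 1 * X 1) = 0 := by
      rw [Ideal.Quotient.eq_zero_iff_mem, ← pow_two]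
      exact Ideal.subset_span (Set.mem_insert _ _)
    rw [h0, map_zero]
  have hw3 : w * w * w = 0 := by
    rw [hwdef, ← map_mul, ← map_mul, ← map_mul, ← map_mul]
    have h0 : (Ideal.Quotient.mk (sp1Ideal k)) (X 0 * X 0 * X 0) = 0 := by
      rw [Ideal.Quotient.eq_zero_iff_mem]
      have e : (X 0 : MvPolynomial (Fin 2) k) * X 0 * X 0 = X 0 ^ 3 := by ring
      rw [e]
      exact Ideal.subset_span (Set.mem_insert_of_mem _ rfl)
    rw [h0, map_zero]
  -- qS z = 0
  have hqz : qS k z = 0 := by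
    have hEz : hP k z * hP k z = 0 := by rw [← map_mul, hz2, map_zero]
    have hEz' : hM k z * hM k z = 0 := by rw [← map_mul, hz2, map_zero]
    have h1 : TrivSqZeroExt.map (LinearMap.fst k k k + LinearMap.snd k k k) (qS k z) = 0 := by
      rw [comm_plus, rho_eq_zero k hEz]
    have h2 : TrivSqZeroExt.map (LinearMap.fst k k k - LinearMap.snd k k k) (qS k z) = 0 := by
      rw [comm_minus, rho_eq_zero k hEz']
    have hfst : fst (qS k z) = 0 := by
      have h := congrArg fst h1
      rwa [TrivSqZeroExt.fst_map, TrivSqZeroExt.fst_zero] at h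
    have hsnd1 : (snd (qS k z)).1 + (snd (qS k z)).2 = 0 := by
      have h := congrArg snd h1
      rwa [TrivSqZeroExt.snd_map, TrivSqZeroExt.snd_zero, LinearMap.add_apply,
        LinearMap.fst_apply, LinearMap.snd_apply] at h
    have hsnd2 : (snd (qS k z)).1 - (snd (qS k z)).2 = 0 := by
      have h := congrArg snd h2
      rwa [TrivSqZeroExt.snd_map, TrivSqZeroExt.snd_zero, LinearMap.sub_apply,
        LinearMap.fst_apply, LinearMap.snd_apply] at h
    have hm1 : (snd (qS k z)).1 = 0 := by
      have h2m : (2 : k) * (snd (qS k z)).1 = 0 := by linear_combination hsnd1 + hsnd2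
      exact (mul_eq_zero.mp h2m).resolve_left hchar2
    have hm2 : (snd (qS k z)).2 = 0 := by
      have h2m : (2 : k) * (snd (qS k z)).2 = 0 := by linear_combination hsnd1 - hsnd2
      exact (mul_eq_zero.mp h2m).resolve_left hchar2
    refine TrivSqZeroExt.ext (by rw [hfst, TrivSqZeroExt.fst_zero]) ?_
    rw [TrivSqZeroExt.snd_zero]
    exact Prod.ext hm1 hm2
  -- (qS w)² = 0
  have hfw : fst (qS k w) = 0 := by
    have hq3 : qS k w * qS k w * qS k w = 0 := by
      rw [← map_mul, ← map_mul, hw3, map_zero]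
    have h3 : fst (qS k w) * fst (qS k w) * fst (qS k w) = 0 := by
      have h := congrArg fst hq3
      rwa [TrivSqZeroExt.fst_mul, TrivSqZeroExt.fst_mul, TrivSqZeroExt.fst_zero] at h
    rcases mul_eq_zero.mp h3 with h | h
    · rcases mul_eq_zero.mp h with h' | h' <;> exact h'
    · exact h
  have hqw2 : qS k w * qS k w = 0 := by
    have hrep : qS k w = inr (snd (qS k w)) := by
      refine TrivSqZeroExt.ext ?_ ?_
      · rw [TrivSqZeroExt.fst_inr]; exact hfw
      · rw [TrivSqZeroExt.snd_inr]
    rw [hrep, inr_mul_inr]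
  -- adjoin {w, z} = ⊤
  have hadj : Algebra.adjoin k ({w, z} : Set _) = ⊤ := by
    let ψ : MvPolynomial (Fin 2) k →ₐ[k] (MvPolynomial (Fin 2) k ⧸ sp2Ideal k) :=
      (φ : (MvPolynomial (Fin 2) k ⧸ sp1Ideal k) →ₐ[k] _).comp
        (Ideal.Quotient.mkₐ k (sp1Ideal k))
    have hψ : Function.Surjective ψ :=
      φ.surjective.comp (Ideal.Quotient.mkₐ_surjective k _)
    have htop : Algebra.adjoin k (ψ '' Set.range X) = ⊤ := by
      rw [← AlgHom.map_adjoin, MvPolynomial.adjoin_range_X, Algebra.map_top,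
        AlgHom.range_eq_top]
      exact hψ
    have hset : ψ '' Set.range X = {w, z} := by
      rw [← Set.range_comp]
      ext u
      simp only [Set.mem_range, Function.comp_apply, Set.mem_insert_iff,
        Set.mem_singleton_iff]
      constructor
      · rintro ⟨i, rfl⟩
        fin_cases i
        · left
          show φ (Ideal.Quotient.mkₐ k (sp1Ideal k) (X 0)) = w
          rw [Ideal.Quotient.mkₐ_eq_mk, hwdef]
        · right
          show φ (Ideal.Quotient.mkₐ k (sp1Ideal k) (X 1)) = z
          rw [Ideal.Quotient.mkₐ_eq_mk, hzdef]
      · rintro (rfl | rfl)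
        · refine ⟨0, ?_⟩
          show φ (Ideal.Quotient.mkₐ k (sp1Ideal k) (X 0)) = w
          rw [Ideal.Quotient.mkₐ_eq_mk, hwdef]
        · refine ⟨1, ?_⟩
          show φ (Ideal.Quotient.mkₐ k (sp1Ideal k) (X 1)) = z
          rw [Ideal.Quotient.mkₐ_eq_mk, hzdef]
    rw [← hset]
    exact htop
  -- every element of the image of qS is of the form α + β * (qS w)
  have hspan : ∀ u : MvPolynomial (Fin 2) k ⧸ sp2Ideal k, ∃ α β : k,
      qS k u = algebraMap k (S k) α + algebraMap k (S k) β * qS k w := by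
    intro u
    have hu : u ∈ Algebra.adjoin k ({w, z} : Set _) := hadj ▸ Algebra.mem_top
    induction hu using Algebra.adjoin_induction with
    | mem x hx =>
      rcases hx with rfl | rfl
      · exact ⟨0, 1, by simp⟩
      · exact ⟨0, 0, by simp [hqz]⟩
    | algebraMap r => exact ⟨r, 0, by simp [AlgHom.commutes]⟩
    | add x y hx hy ihx ihy =>
      obtain ⟨a, b, hab⟩ := ihx
      obtain ⟨c, d, hcd⟩ := ihy
      refine ⟨a + c, b + d, ?_⟩
      rw [map_add, hab, hcd, map_add, map_add]
      ring
    | mul x y hx hy ihx ihy =>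
      obtain ⟨a, b, hab⟩ := ihx
      obtain ⟨c, d, hcd⟩ := ihy
      refine ⟨a * c, a * d + b * c, ?_⟩
      rw [map_mul, hab, hcd, map_mul, map_add, map_mul, map_mul]
      linear_combination (algebraMap k (S k) b * algebraMap k (S k) d) * hqw2
  -- extract the contradiction
  obtain ⟨a1, b1, h1⟩ := hspan (Ideal.Quotient.mk _ (X 0))
  obtain ⟨a2, b2, h2⟩ := hspan (Ideal.Quotient.mk _ (X 1))
  rw [qS_mk] at h1 h2
  simp only [aeval_X, Matrix.cons_val_zero, Matrix.cons_val_one, Matrix.head_cons] at h1 h2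
  have hs1 : ((1 : k), (0 : k)) = b1 • snd (qS k w) := by
    have h := congrArg snd h1
    rwa [TrivSqZeroExt.snd_inr, TrivSqZeroExt.snd_add, TrivSqZeroExt.algebraMap_eq_inl,
      TrivSqZeroExt.snd_inl, TrivSqZeroExt.snd_mul, TrivSqZeroExt.fst_inl,
      TrivSqZeroExt.snd_inl, hfw, smul_zero, add_zero, zero_add] at h
  have hs2 : ((0 : k), (1 : k)) = b2 • snd (qS k w) := by
    have h := congrArg snd h2
    rwa [TrivSqZeroExt.snd_inr, TrivSqZeroExt.snd_add, TrivSqZeroExt.algebraMap_eq_inl,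
      TrivSqZeroExt.snd_inl, TrivSqZeroExt.snd_mul, TrivSqZeroExt.fst_inl,
      TrivSqZeroExt.snd_inl, hfw, smul_zero, add_zero, zero_add] at h
  set m := snd (qS k w) with hm
  have q1 : (1 : k) = b1 * m.1 := congrArg Prod.fst hs1
  have q2 : (0 : k) = b1 * m.2 := congrArg Prod.snd hs1
  have q3 : (0 : k) = b2 * m.1 := congrArg Prod.fst hs2
  have q4 : (1 : k) = b2 * m.2 := congrArg Prod.snd hs2
  have hcontra : (1 : k) = 0 := by
    calc (1 : k) = b1 * m.1 * (b2 * m.2) := by rw [← q1, ← q4]; ring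
    _ = b1 * m.2 * (b2 * m.1) := by ring
    _ = 0 := by rw [← q2, ← q3]; ring
  exact one_ne_zero hcontra
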